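/- Let Ĉ_n^σ(d,k,l,r) denote the number of (d,k,l,r)-constrained binary sequences of length n with NRZI charge σ. Then for σ ≠ n, Ĉ_n^σ = Σ_{j=0}^{min(n,l)} C_{n-j}^{σ-j}, where C_m^τ counts (d,k,r)-sequences of length m beginning with a one with charge τ; and for σ = n, Ĉ_n^n = 1 if n ≤ min(l,r) and 0 otherwise. -/

import Mathlib

/-- Weight of a binary sequence: number of ones. -/
def wt (l : List Bool) : ℕ := l.count true

/-- Length of the leading run of zeros. -/
def leadZeros (l : List Bool) : ℕ := (l.takeWhile (fun b => !b)).length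

/-- Length of the trailing run of zeros. -/
def trailZeros (l : List Bool) : ℕ := (l.reverse.takeWhile (fun b => !b)).length

/-- Every internal run of zeros (between two consecutive ones) has length in `[d, k]`. -/
def internalOK (d k : ℕ) (l : List Bool) : Prop :=
  ∀ i j : ℕ, i < j → j < l.length → l.getD i false = true → l.getD j false = true →
    (∀ m, i < m → m < j → l.getD m false = false) →
    d ≤ j - i - 1 ∧ j - i - 1 ≤ k

/-- NRZI charge accumulator: current bipolar level `z`, remaining bits. -/
def chargeAux : ℤ → List Bool → ℤ
  | _, [] => 0
  | z, b :: t => (if b then -z else z) + chargeAux (if b then -z else z) t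

/-- NRZI charge (digital sum) of a binary sequence. -/
def charge (l : List Bool) : ℤ := chargeAux 1 l

/-- Number of (d,k,r)-sequences of length n and weight ν beginning with a one
(the empty sequence is allowed, giving `A 0 0 = 1`). -/
noncomputable def Adkr (d k r n ν : ℕ) : ℕ :=
  Nat.card {l : List Bool // l.length = n ∧ (l ≠ [] → l.head? = some true) ∧
    internalOK d k l ∧ trailZeros l ≤ r ∧ wt l = ν}

/-- Number of (d,k,l,r)-sequences of length n and weight ν. -/
noncomputable def Adklr (d k L r n ν : ℕ) : ℕ :=
  Nat.card {x : List Bool // x.length = n ∧ leadZeros x ≤ L ∧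
    internalOK d k x ∧ trailZeros x ≤ r ∧ wt x = ν}

/-- Number of (d,k,r)-sequences of length n beginning with a one, with NRZI charge σ. -/
noncomputable def Cdkr (d k r n : ℕ) (σ : ℤ) : ℕ :=
  Nat.card {l : List Bool // l.length = n ∧ (l ≠ [] → l.head? = some true) ∧
    internalOK d k l ∧ trailZeros l ≤ r ∧ charge l = σ}

/-- Number of (d,k,l,r)-sequences of length n with NRZI charge σ. -/
noncomputable def Cdklr (d k L r n : ℕ) (σ : ℤ) : ℕ :=
  Nat.card {x : List Bool // x.length = n ∧ leadZeros x ≤ L ∧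
    internalOK d k x ∧ trailZeros x ≤ r ∧ charge x = σ}

/-- Binomial coefficient with integer upper argument; zero when the upper argument is negative. -/
def ibin (a : ℤ) (b : ℕ) : ℤ := if 0 ≤ a then (a.toNat.choose b : ℤ) else 0

section Aux

lemma getD_replicate_false (j m : ℕ) : (List.replicate j false).getD m false = false := by
  rcases lt_or_ge m j with h | h
  · rw [List.getD_eq_getElem _ _ (by simpa using h)]
    simp
  · exact List.getD_eq_default _ _ (by simpa using h)

lemma internalOK_rep_append (d k j : ℕ) (l : List Bool) :
    internalOK d k (List.replicate j false ++ l) ↔ internalOK d k l := by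
  have hlen : (List.replicate j false ++ l).length = j + l.length := by simp
  have hgetR : ∀ m, m ≥ j →
      (List.replicate j false ++ l).getD m false = l.getD (m - j) false := by
    intro m hm
    rw [List.getD_append_right _ _ _ _ (by simpa using hm)]
    simp
  have hgetL : ∀ m, m < j → (List.replicate j false ++ l).getD m false = false := by
    intro m hm
    rw [List.getD_append _ _ _ _ (by simpa using hm)]
    exact getD_replicate_false j m
  constructor
  · intro H i i' h1 h2 h3 h4 h5
    have key := H (i + j) (i' + j) (by omega) (by omega)
      (by rw [hgetR _ (by omega)]; simpa using h3)
      (by rw [hgetR _ (by omega)]; simpa using h4)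
      (by
        intro m hm1 hm2
        rw [hgetR _ (by omega)]
        have := h5 (m - j) (by omega) (by omega)
        simpa using this)
    omega
  · intro H i i' h1 h2 h3 h4 h5
    have hij : j ≤ i := by
      by_contra hc
      push_neg at hc
      rw [hgetL _ hc] at h3
      simp at h3
    have hij' : j ≤ i' := by omega
    have key := H (i - j) (i' - j) (by omega) (by omega)
      (by rw [← hgetR _ hij]; exact h3)
      (by rw [← hgetR _ hij']; exact h4)
      (by
        intro m hm1 hm2
        have := h5 (m + j) (by omega) (by omega)
        rw [hgetR _ (by omega)] at this
        simpa using this)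
    omega

lemma chargeAux_rep_append (j : ℕ) (l : List Bool) :
    chargeAux 1 (List.replicate j false ++ l) = (j : ℤ) + chargeAux 1 l := by
  induction j with
  | zero => simp
  | succ m ih =>
    rw [List.replicate_succ, List.cons_append]
    simp only [chargeAux, if_neg Bool.false_ne_true]
    rw [ih]
    push_cast
    ring

lemma charge_rep_append (j : ℕ) (l : List Bool) :
    charge (List.replicate j false ++ l) = (j : ℤ) + charge l :=
  chargeAux_rep_append j l

lemma chargeAux_le_length (l : List Bool) :
    ∀ z : ℤ, -1 ≤ z → z ≤ 1 → chargeAux z l ≤ l.length := by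
  induction l with
  | nil => intro z _ _; simp [chargeAux]
  | cons b t ih =>
    intro z h1 h2
    cases b
    · have := ih z h1 h2
      simp only [chargeAux, if_neg Bool.false_ne_true, List.length_cons]
      push_cast
      omega
    · have := ih (-z) (by omega) (by omega)
      simp only [chargeAux, if_pos rfl, List.length_cons]
      push_cast
      omega

lemma charge_eq_length (l : List Bool) (h : charge l = l.length) : ∀ b ∈ l, b = false := by
  induction l with
  | nil => simp
  | cons b t ih =>
    cases b
    · have h' : charge t = t.length := by
        have hle := chargeAux_le_length t 1 (by norm_num) (by norm_num)
        simp only [charge, chargeAux, if_neg Bool.false_ne_true, List.length_cons] at h ⊢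
        push_cast at h
        omega
      intro b hb
      rcases List.mem_cons.mp hb with rfl | hb
      · rfl
      · exact ih h' b hb
    · exfalso
      have hle := chargeAux_le_length t (-1) (by norm_num) (by norm_num)
      simp only [charge, chargeAux, if_pos rfl, List.length_cons] at h
      push_cast at h
      omega

lemma leadZeros_le_length (x : List Bool) : leadZeros x ≤ x.length := by
  simpa [leadZeros] using (List.takeWhile_sublist (l := x) (fun b => !b)).length_le

lemma takeWhile_eq_rep (x : List Bool) :
    x.takeWhile (fun b => !b) = List.replicate (leadZeros x) false := by
  rw [List.eq_replicate_iff]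
  refine ⟨rfl, ?_⟩
  intro b hb
  have := List.mem_takeWhile_imp hb
  simpa using this

lemma lead_decomp (x : List Bool) :
    x = List.replicate (leadZeros x) false ++ x.drop (leadZeros x) := by
  have h1 := takeWhile_eq_rep x
  have h2 : x.drop (leadZeros x) = x.dropWhile (fun b => !b) := by
    conv_lhs => rw [← List.takeWhile_append_dropWhile (p := fun b => !b) (l := x)]
    rw [List.drop_left' (by simp [leadZeros])]
  rw [h2, ← h1, List.takeWhile_append_dropWhile]

lemma head_drop_lead (x : List Bool) (h : x.drop (leadZeros x) ≠ []) :
    (x.drop (leadZeros x)).head? = some true := by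
  have h2 : x.drop (leadZeros x) = x.dropWhile (fun b => !b) := by
    conv_lhs => rw [← List.takeWhile_append_dropWhile (p := fun b => !b) (l := x)]
    rw [List.drop_left' (by simp [leadZeros])]
  rw [h2] at h ⊢
  rw [List.head?_eq_head h]
  have := List.head_dropWhile_not (fun b => !b) (l := x) h
  simp at this
  simp [this]

lemma leadZeros_rep_append (j : ℕ) (l : List Bool) (h : l ≠ [] → l.head? = some true) :
    leadZeros (List.replicate j false ++ l) = j := by
  induction j with
  | zero =>
    simp only [List.replicate_zero, List.nil_append]
    cases l with
    | nil => simp [leadZeros]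
    | cons b t =>
      have hb : b = true := by simpa using h (by simp)
      subst hb
      simp [leadZeros, List.takeWhile_cons]
  | succ m ih =>
    rw [List.replicate_succ, List.cons_append]
    simp only [leadZeros, List.takeWhile_cons] at ih ⊢
    simpa using ih

lemma len_takeWhile_le_append (p : Bool → Bool) (A B : List Bool) :
    (A.takeWhile p).length ≤ ((A ++ B).takeWhile p).length := by
  induction A with
  | nil => simp
  | cons a t ih =>
    by_cases h : p a
    · simpa [List.takeWhile_cons, h] using ih
    · simp [List.takeWhile_cons, h]

lemma takeWhile_append_of_ex (p : Bool → Bool) (A B : List Bool)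
    (h : ∃ a ∈ A, p a = false) : ((A ++ B).takeWhile p) = A.takeWhile p := by
  induction A with
  | nil => simp at h
  | cons a t ih =>
    by_cases hpa : p a
    · have ht : ∃ a ∈ t, p a = false := by
        rcases h with ⟨x, hx, hpx⟩
        rcases List.mem_cons.mp hx with rfl | hx
        · rw [hpa] at hpx; simp at hpx
        · exact ⟨x, hx, hpx⟩
      simp [List.takeWhile_cons, hpa, ih ht]
    · simp [List.takeWhile_cons, hpa]

lemma trailZeros_le_rep_append (j : ℕ) (l : List Bool) :
    trailZeros l ≤ trailZeros (List.replicate j false ++ l) := by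
  unfold trailZeros
  rw [List.reverse_append, List.reverse_replicate]
  exact len_takeWhile_le_append _ _ _

lemma trailZeros_rep_append (j : ℕ) (l : List Bool) (h : true ∈ l) :
    trailZeros (List.replicate j false ++ l) = trailZeros l := by
  unfold trailZeros
  rw [List.reverse_append, List.reverse_replicate, takeWhile_append_of_ex]
  exact ⟨true, by simpa using h, rfl⟩

lemma charge_replicate (n : ℕ) : charge (List.replicate n false) = n := by
  have := charge_rep_append n []
  simpa [charge, chargeAux] using this

lemma leadZeros_replicate (n : ℕ) : leadZeros (List.replicate n false) = n := by
  have := leadZeros_rep_append n [] (by simp)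
  simpa using this

lemma trailZeros_replicate (n : ℕ) : trailZeros (List.replicate n false) = n := by
  have : (List.replicate n false).takeWhile (fun b => !b) = List.replicate n false := by
    rw [List.takeWhile_eq_self_iff]
    intro b hb
    simp [List.eq_of_mem_replicate hb]
  simp [trailZeros, List.reverse_replicate, this]

lemma internalOK_replicate (d k n : ℕ) : internalOK d k (List.replicate n false) := by
  intro i j _ _ h3 _ _
  rw [getD_replicate_false] at h3
  simp at h3

lemma sigma_subtype_ext {ι : Type*} {α : Type*} {P : ι → α → Prop}
    {s t : Σ j : ι, {l : α // P j l}}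
    (h1 : s.1 = t.1) (h2 : (s.2 : α) = (t.2 : α)) : s = t := by
  obtain ⟨a, x⟩ := s
  obtain ⟨b, y⟩ := t
  dsimp at h1
  subst h1
  dsimp at h2
  exact congrArg (Sigma.mk a) (Subtype.ext h2)

noncomputable def chargeEquiv (d k L r n : ℕ) (σ : ℤ) (hσ : σ ≠ (n : ℤ)) :
    {x : List Bool // x.length = n ∧ leadZeros x ≤ L ∧ internalOK d k x ∧
      trailZeros x ≤ r ∧ charge x = σ} ≃
    Σ j : Fin (min n L + 1), {l : List Bool // l.length = n - (j : ℕ) ∧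
      (l ≠ [] → l.head? = some true) ∧ internalOK d k l ∧ trailZeros l ≤ r ∧
      charge l = σ - ((j : ℕ) : ℤ)} where
  toFun x := ⟨⟨leadZeros x.1, by
      have h1 := x.2.1
      have h2 := x.2.2.1
      have h3 := leadZeros_le_length x.1
      omega⟩,
    ⟨x.1.drop (leadZeros x.1), by
      obtain ⟨hlen, hlead, hok, htr, hch⟩ := x.2
      refine ⟨by simp [hlen], head_drop_lead x.1, ?_, ?_, ?_⟩
      · refine (internalOK_rep_append d k (leadZeros x.1) _).mp ?_
        rw [← lead_decomp x.1]
        exact hok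
      · have h1 := trailZeros_le_rep_append (leadZeros x.1) (x.1.drop (leadZeros x.1))
        rw [← lead_decomp x.1] at h1
        omega
      · show charge (x.1.drop (leadZeros x.1)) = σ - (leadZeros x.1 : ℤ)
        have h2 := charge_rep_append (leadZeros x.1) (x.1.drop (leadZeros x.1))
        rw [← lead_decomp x.1] at h2
        rw [hch] at h2
        omega⟩⟩
  invFun s := ⟨List.replicate ((s.1 : ℕ)) false ++ (s.2 : List Bool), by
    obtain ⟨⟨j, hj⟩, l, hlen, hh, hok, htr, hch⟩ := s
    dsimp at hlen hch ⊢
    have hjn : j ≤ min n L := by omega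
    have hne : l ≠ [] := by
      intro he
      rw [he] at hlen hch
      simp [charge, chargeAux] at hch
      simp at hlen
      have : j = n := by omega
      rw [this] at hch
      omega
    have hmem : true ∈ l := by
      cases l with
      | nil => exact absurd rfl hne
      | cons b t =>
        have := hh hne
        simp at this
        rw [this]
        exact List.mem_cons_self
    refine ⟨by simp [hlen]; omega, ?_, ?_, ?_, ?_⟩
    · rw [leadZeros_rep_append j l hh]; omega
    · exact (internalOK_rep_append d k j l).mpr hok
    · rw [trailZeros_rep_append j l hmem]; exact htr
    · rw [charge_rep_append, hch]; ring⟩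
  left_inv x := Subtype.ext (lead_decomp x.1).symm
  right_inv s := by
    obtain ⟨⟨j, hj⟩, l, hlen, hh, hok, htr, hch⟩ := s
    have hlead : leadZeros (List.replicate j false ++ l) = j :=
      leadZeros_rep_append j l hh
    refine sigma_subtype_ext (Fin.ext ?_) ?_
    · exact hlead
    · show (List.replicate j false ++ l).drop
        (leadZeros (List.replicate j false ++ l)) = l
      rw [hlead]
      exact List.drop_left' (by simp)

end Aux

theorem stmt19 (d k L r n : ℕ) (hk : d ≤ k) :
    (∀ σ : ℤ, σ ≠ (n : ℤ) →
      Cdklr d k L r n σ =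
        ∑ j ∈ Finset.range (min n L + 1), Cdkr d k r (n - j) (σ - (j : ℤ))) ∧
    Cdklr d k L r n (n : ℤ) = if n ≤ min L r then 1 else 0 := by
  classical
  constructor
  · intro σ hσ
    have hfin : ∀ (m : ℕ) (τ : ℤ), Finite {l : List Bool // l.length = m ∧
        (l ≠ [] → l.head? = some true) ∧ internalOK d k l ∧ trailZeros l ≤ r ∧
        charge l = τ} := by
      intro m τ
      exact ((List.finite_length_eq Bool m).subset (fun l hl => hl.1)).to_subtype
    haveI : ∀ j : Fin (min n L + 1), Fintype {l : List Bool // l.length = n - (j : ℕ) ∧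
        (l ≠ [] → l.head? = some true) ∧ internalOK d k l ∧ trailZeros l ≤ r ∧
        charge l = σ - ((j : ℕ) : ℤ)} := fun j => @Fintype.ofFinite _ (hfin _ _)
    rw [Cdklr, Nat.card_congr (chargeEquiv d k L r n σ hσ),
      Nat.card_eq_fintype_card, Fintype.card_sigma, Finset.sum_range]
    refine Finset.sum_congr rfl fun j _ => ?_
    rw [Cdkr, Nat.card_eq_fintype_card]
  · have hset : {x : List Bool | x.length = n ∧ leadZeros x ≤ L ∧ internalOK d k x ∧
        trailZeros x ≤ r ∧ charge x = (n : ℤ)} =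
        if n ≤ min L r then {List.replicate n false} else ∅ := by
      split
      case isTrue h =>
        ext x
        simp only [Set.mem_setOf_eq, Set.mem_singleton_iff]
        constructor
        · rintro ⟨h1, _, _, _, h5⟩
          exact List.eq_replicate_iff.mpr ⟨h1, charge_eq_length x (by rw [h5, h1])⟩
        · rintro rfl
          exact ⟨by simp, by rw [leadZeros_replicate]; omega, internalOK_replicate d k n,
            by rw [trailZeros_replicate]; omega, charge_replicate n⟩
      case isFalse h =>
        ext x
        simp only [Set.mem_setOf_eq, Set.mem_empty_iff_false, iff_false, not_and]
        rintro h1 h2 _ h4 h5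
        have hx : x = List.replicate n false :=
          List.eq_replicate_iff.mpr ⟨h1, charge_eq_length x (by rw [h5, h1])⟩
        rw [hx, leadZeros_replicate] at h2
        rw [hx, trailZeros_replicate] at h4
        omega
    rw [Cdklr]
    show Nat.card ↥{x : List Bool | x.length = n ∧ leadZeros x ≤ L ∧ internalOK d k x ∧
        trailZeros x ≤ r ∧ charge x = (n : ℤ)} = _
    rw [Nat.card_coe_set_eq, hset]
    split
    · exact Set.ncard_singleton _
    · exact Set.ncard_empty _
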